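/- Fix s ∈ ℝ, let k be the Stieltjes–Volterra kernel of type B^∞ on [s, s+τ_N]×[s, s+τ_N] defined by k(t,τ) := Σ_{j=1}^N D_j(t) 𝔥(τ − t + τ_j) − Σ_{j=1}^N D_j(t) for τ ∈ [s,t] and k(t,τ) := 0 for τ > t (𝔥 the left-continuous Heaviside function with 𝔥(τ)=0 for τ ≤ 0), and let ρ be its resolvent. Then for all (t,α) ∈ [s, s+τ_N) × [s, s+τ_N) one has H(t−α) I_d + ρ(t,α) = X(t,α), where H is the right-continuous Heaviside function (H(τ) = 0 for τ < 0, H(τ) = 1 for τ ≥ 0) and X is the fundamental solution. -/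

import Mathlib

open MeasureTheory Set
open scoped ENNReal NNReal
open scoped Matrix.Norms.L2Operator

noncomputable section

-- The Lebesgue–Stieltjes measure of a monotone function (zero if not monotone).
open scoped Classical in
noncomputable def monoMeasure (m : ℝ → ℝ) : Measure ℝ :=
  if h : Monotone m then h.stieltjesFunction.measure else 0

/-- The function `f` clamped to the interval `[c,e]`. -/
def clampOn (f : ℝ → ℝ) (c e : ℝ) : ℝ → ℝ := fun x => f (max c (min x e))

/-- Cumulative total variation of the clamped function. -/
def varFun (f : ℝ → ℝ) (c e : ℝ) : ℝ → ℝ :=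
  fun x => (eVariationOn (clampOn f c e) (Icc c x)).toReal

/-- Positive (Jordan) part. -/
def posPartFun (f : ℝ → ℝ) (c e : ℝ) : ℝ → ℝ :=
  fun x => (varFun f c e x + clampOn f c e x - f c) / 2

/-- Negative (Jordan) part. -/
def negPartFun (f : ℝ → ℝ) (c e : ℝ) : ℝ → ℝ :=
  fun x => (varFun f c e x - clampOn f c e x + f c) / 2

/-- Lebesgue–Stieltjes integral of `φ` against (the measure associated with the
restriction to `[c,e)` of) the function `f`, over `[c,e)`. -/
def lsIntIcoR (f : ℝ → ℝ) (c e : ℝ) (φ : ℝ → ℝ) : ℝ :=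
  (∫ x in Ico c e, φ x ∂(monoMeasure (posPartFun f c e))) -
  (∫ x in Ico c e, φ x ∂(monoMeasure (negPartFun f c e)))

/-- Same, over the open interval `(c,e)`. -/
def lsIntIooR (f : ℝ → ℝ) (c e : ℝ) (φ : ℝ → ℝ) : ℝ :=
  (∫ x in Ioo c e, φ x ∂(monoMeasure (posPartFun f c e))) -
  (∫ x in Ioo c e, φ x ∂(monoMeasure (negPartFun f c e)))

/-- Complex Lebesgue–Stieltjes integral `∫_{[c,e)} φ df`. -/
def lsIntIcoC (f : ℝ → ℂ) (c e : ℝ) (φ : ℝ → ℂ) : ℂ :=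
  (lsIntIcoR (fun x => (f x).re) c e (fun x => (φ x).re)
    - lsIntIcoR (fun x => (f x).im) c e (fun x => (φ x).im))
  + Complex.I * (lsIntIcoR (fun x => (f x).re) c e (fun x => (φ x).im)
    + lsIntIcoR (fun x => (f x).im) c e (fun x => (φ x).re))

def lsIntIooC (f : ℝ → ℂ) (c e : ℝ) (φ : ℝ → ℂ) : ℂ :=
  (lsIntIooR (fun x => (f x).re) c e (fun x => (φ x).re)
    - lsIntIooR (fun x => (f x).im) c e (fun x => (φ x).im))
  + Complex.I * (lsIntIooR (fun x => (f x).re) c e (fun x => (φ x).im)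
    + lsIntIooR (fun x => (f x).im) c e (fun x => (φ x).re))

/-- `∫_{[c,e)} dF(τ) G(τ)` for matrix-valued `F` (the integrator) and `G`. -/
def lsIntIcoMM {d : ℕ} (F : ℝ → Matrix (Fin d) (Fin d) ℂ) (c e : ℝ)
    (G : ℝ → Matrix (Fin d) (Fin d) ℂ) : Matrix (Fin d) (Fin d) ℂ :=
  Matrix.of fun i k => ∑ j, lsIntIcoC (fun τ => F τ i j) c e (fun τ => G τ j k)

/-- `∫_{[c,e)} dF(τ) g(τ)` for matrix-valued `F` and vector-valued `g`. -/
def lsIntIcoMV {d : ℕ} (F : ℝ → Matrix (Fin d) (Fin d) ℂ) (c e : ℝ)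
    (g : ℝ → Fin d → ℂ) : Fin d → ℂ :=
  fun i => ∑ j, lsIntIcoC (fun τ => F τ i j) c e (fun τ => g τ j)

def lsIntIooMV {d : ℕ} (F : ℝ → Matrix (Fin d) (Fin d) ℂ) (c e : ℝ)
    (g : ℝ → Fin d → ℂ) : Fin d → ℂ :=
  fun i => ∑ j, lsIntIooC (fun τ => F τ i j) c e (fun τ => g τ j)

instance matrixMeasurableSpace {d : ℕ} : MeasurableSpace (Matrix (Fin d) (Fin d) ℂ) :=
  inferInstanceAs (MeasurableSpace (Fin d → Fin d → ℂ))

/-- A Stieltjes–Volterra kernel of type `B^∞` on `[a,b] × [a,b]`. -/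
def IsSVKernel (d : ℕ) (a b : ℝ) (κ : ℝ → ℝ → Matrix (Fin d) (Fin d) ℂ) : Prop :=
  Measurable ((Icc a b ×ˢ Icc a b).restrict (fun p : ℝ × ℝ => κ p.1 p.2)) ∧
  (∀ t ∈ Icc a b, ∀ τ ∈ Icc a b, t ≤ τ → κ t τ = 0) ∧
  (∀ t ∈ Icc a b, ∀ x ∈ Icc a b, ContinuousWithinAt (κ t) (Icc a b ∩ Iio x) x) ∧
  (∃ C : ℝ, ∀ t ∈ Icc a b, eVariationOn (κ t) (Icc a b) ≤ ENNReal.ofReal C) ∧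
  (∀ ε > (0:ℝ), ∃ η > (0:ℝ), ∀ t ∈ Icc a b, ∀ τ ∈ Icc a b, 0 < t - τ → t - τ < η →
      eVariationOn (κ t) (Ico τ t) < ENNReal.ofReal ε)

/-- The norm `‖κ‖_{[a,b]} = sup_t ‖κ(t,·)‖_{BV([a,b])}` (base point `b`). -/
def KNorm (d : ℕ) (a b : ℝ) (κ : ℝ → ℝ → Matrix (Fin d) (Fin d) ℂ) : ℝ≥0∞ :=
  ⨆ t ∈ Icc a b, eVariationOn (κ t) (Icc a b)

/-- `ρ` is a resolvent of the kernel `κ`. -/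
def IsResolvent (d : ℕ) (a b : ℝ) (κ ρ : ℝ → ℝ → Matrix (Fin d) (Fin d) ℂ) : Prop :=
  IsSVKernel d a b ρ ∧
  ∀ t ∈ Icc a b, ∀ β ∈ Icc a b,
    ρ t β = -κ t β + lsIntIcoMM (κ t) β t (fun τ => ρ τ β)

/-- The left-continuous Heaviside function: `𝔥 x = 0` for `x ≤ 0` and `1` for `x > 0`. -/
noncomputable def lcHeaviside (x : ℝ) : ℝ := if 0 < x then 1 else 0

lemma lcH_nonpos {x : ℝ} (h : x ≤ 0) : lcHeaviside x = 0 := by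
  simp [lcHeaviside, not_lt.2 h]

lemma lcH_pos {x : ℝ} (h : 0 < x) : lcHeaviside x = 1 := by simp [lcHeaviside, h]

lemma lcH_mono : Monotone lcHeaviside := by
  intro x y hxy
  unfold lcHeaviside
  by_cases h1 : 0 < x
  · rw [if_pos h1, if_pos (lt_of_lt_of_le h1 hxy)]
  · rw [if_neg h1]
    split_ifs <;> norm_num

lemma lcH_nonneg (x : ℝ) : 0 ≤ lcHeaviside x := by unfold lcHeaviside; split_ifs <;> norm_num

lemma eVariationOn_neg (f : ℝ → ℝ) (s : Set ℝ) :
    eVariationOn (fun x => -(f x)) s = eVariationOn f s := by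
  dsimp only [eVariationOn]
  congr 1 with p : 1
  congr 1 with i : 1
  rw [edist_neg_neg]

lemma evar_single {w u v C : ℝ} (huv : u < v) :
    eVariationOn (fun y => w * lcHeaviside (y - u) + C) (Icc u v) = ENNReal.ofReal |w| := by
  have key : ∀ (w C : ℝ), 0 ≤ w →
      eVariationOn (fun y => w * lcHeaviside (y - u) + C) (Icc u v) = ENNReal.ofReal w := by
    intro w C hw
    apply le_antisymm
    · have hmono : MonotoneOn (fun y => w * lcHeaviside (y - u) + C) (Icc u v) := by
        intro x _ y _ hxy
        have := lcH_mono (sub_le_sub_right hxy u)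
        dsimp only
        have := mul_le_mul_of_nonneg_left this hw; linarith
      have := hmono.eVariationOn_le (a := u) (b := v)
        ⟨le_refl u, huv.le⟩ ⟨huv.le, le_refl v⟩
      rw [inter_self] at this
      refine this.trans (le_of_eq ?_)
      congr 1
      rw [lcH_pos (by linarith), lcH_nonpos (by linarith)]
      ring
    · have h1 : ((u + v)/2 : ℝ) ∈ Icc u v := ⟨by linarith, by linarith⟩
      have h2 : u ∈ Icc u v := ⟨le_refl u, huv.le⟩
      have := eVariationOn.edist_le (fun y => w * lcHeaviside (y - u) + C) h1 h2
      refine le_trans (le_of_eq ?_) this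
      have e1 : lcHeaviside ((u + v)/2 - u) = 1 := lcH_pos (by linarith)
      have e2 : lcHeaviside (u - u) = 0 := lcH_nonpos (by linarith)
      simp only [edist_dist, Real.dist_eq, e1, e2, mul_one, mul_zero, zero_add,
        add_sub_add_right_eq_sub, sub_zero, add_sub_cancel_right]
      rw [abs_of_nonneg hw]
  rcases le_or_gt 0 w with hw | hw
  · rw [key w C hw, abs_of_nonneg hw]
  · have : (fun y => w * lcHeaviside (y - u) + C)
        = fun y => -((-w) * lcHeaviside (y - u) + (-C)) := by funext y; ring
    rw [this, eVariationOn_neg, key (-w) (-C) (by linarith), abs_of_neg hw]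

lemma evar_step {ι : Type} [DecidableEq ι] (a w : ι → ℝ) (s : Finset ι) :
    ∀ (c x C : ℝ), c ≤ x → (∀ j ∈ s, c ≤ a j ∧ a j < x) → Set.InjOn a s →
    eVariationOn (fun y => (∑ j ∈ s, w j * lcHeaviside (y - a j)) + C) (Icc c x)
      = ENNReal.ofReal (∑ j ∈ s, |w j|) := by
  induction s using Finset.strongInduction with
  | _ s ih =>
    intro c x C hcx hmem hinj
    rcases s.eq_empty_or_nonempty with rfl | hne
    · simp only [Finset.sum_empty, zero_add]
      rw [eVariationOn.constant_on ?_]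
      · simp
      · intro p hp q hq
        obtain ⟨y, _, rfl⟩ := hp; obtain ⟨z, _, rfl⟩ := hq; rfl
    · obtain ⟨j0, hj0, hmax⟩ := s.exists_max_image a hne
      set A := a j0 with hA
      have hcA : c ≤ A := (hmem j0 hj0).1
      have hAx : A < x := (hmem j0 hj0).2
      have hlt : ∀ j ∈ s.erase j0, a j < A := by
        intro j hj
        rcases Finset.mem_erase.1 hj with ⟨hne', hjs⟩
        exact lt_of_le_of_ne (hmax j hjs) (fun h => hne' (hinj hjs hj0 h))
      set f := fun y => (∑ j ∈ s, w j * lcHeaviside (y - a j)) + C with hf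
      have split := eVariationOn.Icc_add_Icc f (s := univ) hcA hAx.le (mem_univ A)
      simp only [univ_inter] at split
      rw [← split]
      have heq1 : EqOn f (fun y => (∑ j ∈ s.erase j0, w j * lcHeaviside (y - a j)) + C)
          (Icc c A) := by
        intro y hy
        show (∑ j ∈ s, w j * lcHeaviside (y - a j)) + C = _
        rw [← Finset.sum_erase_add s _ hj0]
        have hz : w j0 * lcHeaviside (y - A) = 0 := by
          rw [lcH_nonpos (by have := hy.2; linarith)]; ring
        rw [hz, add_zero]
      have e1 : eVariationOn f (Icc c A)
          = ENNReal.ofReal (∑ j ∈ s.erase j0, |w j|) := by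
        rw [eVariationOn.eq_of_eqOn heq1]
        exact ih (s.erase j0) (Finset.erase_ssubset hj0) c A C hcA
          (fun j hj => ⟨(hmem j (Finset.mem_of_mem_erase hj)).1, hlt j hj⟩)
          (hinj.mono (fun y hy => Finset.mem_coe.2
            (Finset.mem_of_mem_erase (Finset.mem_coe.1 hy))))
      have heq2 : EqOn f
          (fun y => w j0 * lcHeaviside (y - A) + ((∑ j ∈ s.erase j0, w j) + C))
          (Icc A x) := by
        intro y hy
        show (∑ j ∈ s, w j * lcHeaviside (y - a j)) + C = _
        rw [← Finset.sum_erase_add s _ hj0]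
        have hone : ∀ j ∈ s.erase j0, w j * lcHeaviside (y - a j) = w j := by
          intro j hj
          rw [lcH_pos (by have := hlt j hj; have := hy.1; linarith)]; ring
        rw [Finset.sum_congr rfl hone]
        ring
      have e2 : eVariationOn f (Icc A x) = ENNReal.ofReal |w j0| := by
        rw [eVariationOn.eq_of_eqOn heq2]
        exact evar_single hAx
      rw [e1, e2, ← ENNReal.ofReal_add (Finset.sum_nonneg fun _ _ => abs_nonneg _)
        (abs_nonneg _), Finset.sum_erase_add s _ hj0]
lemma step_mono {ι : Type} (s : Finset ι) (a u : ι → ℝ) (hu : ∀ j ∈ s, 0 ≤ u j) :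
    Monotone (fun x => ∑ j ∈ s, u j * lcHeaviside (x - a j)) := by
  intro x y hxy
  refine Finset.sum_le_sum (fun j hj => ?_)
  exact mul_le_mul_of_nonneg_left (lcH_mono (sub_le_sub_right hxy _)) (hu j hj)

lemma rightLim_step {ι : Type} (s : Finset ι) (a u : ι → ℝ) (x : ℝ) :
    Function.rightLim (fun y => ∑ j ∈ s, u j * lcHeaviside (y - a j)) x
      = ∑ j ∈ s, u j * (if a j ≤ x then 1 else 0) := by
  refine rightLim_eq_of_tendsto ?_
  refine tendsto_finset_sum _ (fun j _ => ?_)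
  by_cases h : a j ≤ x
  · rw [if_pos h]
    refine Filter.Tendsto.congr' ?_ (tendsto_const_nhds (x := u j * 1))
    filter_upwards [self_mem_nhdsWithin] with y hy
    rw [lcH_pos (by simp only [mem_Ioi] at hy; linarith)]
  · rw [if_neg h]
    push_neg at h
    have hmem : Ioo x (a j) ∈ nhdsWithin x (Ioi x) := Ioo_mem_nhdsGT_of_mem ⟨le_refl x, h⟩
    have : (fun _ : ℝ => u j * 0) =ᶠ[nhdsWithin x (Ioi x)]
        (fun y => u j * lcHeaviside (y - a j)) := by
      filter_upwards [hmem] with y hy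
      rw [lcH_nonpos (by have := hy.2; linarith)]
    simpa using Filter.Tendsto.congr' this (tendsto_const_nhds (x := u j * 0))

lemma monoMeasure_step {ι : Type} (s : Finset ι) (a u : ι → ℝ) (hu : ∀ j ∈ s, 0 ≤ u j) :
    monoMeasure (fun x => ∑ j ∈ s, u j * lcHeaviside (x - a j))
      = ∑ j ∈ s, (ENNReal.ofReal (u j)) • Measure.dirac (a j) := by
  have hm := step_mono s a u hu
  rw [monoMeasure, dif_pos hm]
  refine Measure.ext_of_Ioc _ _ (fun p q hpq => ?_)
  rw [StieltjesFunction.measure_Ioc]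
  have hF : ∀ z, hm.stieltjesFunction z = ∑ j ∈ s, u j * (if a j ≤ z then 1 else 0) :=
    fun z => by rw [Monotone.stieltjesFunction_eq, rightLim_step]
  rw [hF, hF, ← Finset.sum_sub_distrib]
  have hterm : ∀ j ∈ s, (0:ℝ) ≤ u j * (if a j ≤ q then 1 else 0) - u j * (if a j ≤ p then 1 else 0) := by
    intro j hj
    have := hu j hj
    split_ifs with h1 h2 h2 <;> [linarith; linarith; linarith; linarith]
  rw [ENNReal.ofReal_sum_of_nonneg hterm, Measure.finset_sum_apply]
  refine Finset.sum_congr rfl (fun j hj => ?_)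
  rw [Measure.smul_apply, Measure.dirac_apply' _ measurableSet_Ioc, smul_eq_mul]
  rw [Set.indicator_apply]
  by_cases hq : a j ≤ q
  · by_cases hp : a j ≤ p
    · rw [if_pos hq, if_pos hp, if_neg (by simp [mem_Ioc]; intro h; linarith)]
      simp
    · rw [if_pos hq, if_neg hp, if_pos (by simp [mem_Ioc]; exact ⟨lt_of_not_ge hp, hq⟩)]
      simp
  · rw [if_neg hq, if_neg (fun hmem => hq (mem_Ioc.1 hmem).2),
      if_neg (fun hp => hq (le_trans hp hpq.le))]
    simp
section Step
open scoped Classical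
variable {ι : Type} [Fintype ι] (a w : ι → ℝ) (C c e : ℝ)

lemma clamp_step (hce : c ≤ e) :
    clampOn (fun x => (∑ j, w j * lcHeaviside (x - a j)) + C) c e
      = fun x => (∑ j ∈ Finset.univ.filter (fun j => c ≤ a j ∧ a j < e),
          w j * lcHeaviside (x - a j))
        + ((∑ j ∈ Finset.univ.filter (fun j => a j < c), w j) + C) := by
  funext x
  unfold clampOn
  set m := max c (min x e) with hm
  have hmc : c ≤ m := le_max_left _ _
  have hme : m ≤ e := max_le hce (min_le_right _ _)
  have key : ∀ j, w j * lcHeaviside (m - a j)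
      = (if c ≤ a j ∧ a j < e then w j * lcHeaviside (x - a j) else 0)
        + (if a j < c then w j else 0) := by
    intro j
    by_cases hj1 : c ≤ a j ∧ a j < e
    · rw [if_pos hj1, if_neg (not_lt.2 hj1.1), add_zero]
      congr 1
      unfold lcHeaviside
      refine if_congr ?_ rfl rfl
      rw [sub_pos, sub_pos, hm, lt_max_iff, lt_min_iff]
      constructor
      · rintro (h | h)
        · exact absurd hj1.1 (not_le.2 h)
        · exact h.1
      · intro h; exact Or.inr ⟨h, hj1.2⟩
    · by_cases hj2 : a j < c
      · rw [if_neg hj1, if_pos hj2, zero_add, lcH_pos (by linarith), mul_one]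
      · rw [if_neg hj1, if_neg hj2, add_zero]
        push_neg at hj1 hj2
        have : e ≤ a j := hj1 hj2
        rw [lcH_nonpos (by linarith), mul_zero]
  dsimp only
  rw [Finset.sum_congr rfl (fun j _ => key j), Finset.sum_add_distrib,
    ← Finset.sum_filter, ← Finset.sum_filter, add_assoc]

lemma fc_eq :
    (∑ j, w j * lcHeaviside (c - a j)) + C
      = (∑ j ∈ Finset.univ.filter (fun j => a j < c), w j) + C := by
  congr 1
  rw [Finset.sum_filter]
  refine Finset.sum_congr rfl (fun j _ => ?_)
  by_cases h : a j < c
  · rw [if_pos h, lcH_pos (by linarith), mul_one]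
  · rw [if_neg h, lcH_nonpos (by push_neg at h; linarith), mul_zero]

lemma varFun_step (hce : c ≤ e) (hinj : Function.Injective a) :
    varFun (fun x => (∑ j, w j * lcHeaviside (x - a j)) + C) c e
      = fun x => ∑ j ∈ Finset.univ.filter (fun j => c ≤ a j ∧ a j < e),
          |w j| * lcHeaviside (x - a j) := by
  funext x
  set S := Finset.univ.filter (fun j => c ≤ a j ∧ a j < e) with hS
  unfold varFun
  rw [clamp_step a w C c e hce]
  by_cases hx : c ≤ x
  · set T := S.filter (fun j => a j < x) with hT
    have heq : EqOn
        (fun y => (∑ j ∈ S, w j * lcHeaviside (y - a j))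
          + ((∑ j ∈ Finset.univ.filter (fun j => a j < c), w j) + C))
        (fun y => (∑ j ∈ T, w j * lcHeaviside (y - a j))
          + ((∑ j ∈ Finset.univ.filter (fun j => a j < c), w j) + C)) (Icc c x) := by
      intro y hy
      dsimp only
      congr 1
      have key : ∀ j ∈ S, w j * lcHeaviside (y - a j)
          = if a j < x then w j * lcHeaviside (y - a j) else 0 := by
        intro j hj
        by_cases h : a j < x
        · rw [if_pos h]
        · rw [if_neg h, lcH_nonpos (by push_neg at h; have := hy.2; linarith), mul_zero]
      rw [Finset.sum_congr rfl key, ← Finset.sum_filter, hT]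
    rw [eVariationOn.eq_of_eqOn heq,
      evar_step a w T c x _ hx
        (fun j hj => ⟨((Finset.mem_filter.1 (Finset.mem_filter.1 hj).1).2).1,
          (Finset.mem_filter.1 hj).2⟩)
        hinj.injOn,
      ENNReal.toReal_ofReal (Finset.sum_nonneg (fun _ _ => abs_nonneg _))]
    have key2 : ∀ j ∈ S, |w j| * lcHeaviside (x - a j)
        = if a j < x then |w j| else 0 := by
      intro j hj
      by_cases h : a j < x
      · rw [if_pos h, lcH_pos (by linarith), mul_one]
      · rw [if_neg h, lcH_nonpos (by push_neg at h; linarith), mul_zero]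
    rw [Finset.sum_congr rfl key2, ← Finset.sum_filter, hT]
  · push_neg at hx
    rw [Set.Icc_eq_empty (not_le.2 hx)]
    rw [eVariationOn.subsingleton _ subsingleton_empty]
    rw [ENNReal.toReal_zero]
    symm
    refine Finset.sum_eq_zero (fun j hj => ?_)
    have : c ≤ a j := ((Finset.mem_filter.1 hj).2).1
    rw [lcH_nonpos (by linarith), mul_zero]

lemma posPart_step (hce : c ≤ e) (hinj : Function.Injective a) :
    posPartFun (fun x => (∑ j, w j * lcHeaviside (x - a j)) + C) c e
      = fun x => ∑ j ∈ Finset.univ.filter (fun j => c ≤ a j ∧ a j < e),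
          ((|w j| + w j)/2) * lcHeaviside (x - a j) := by
  funext x
  unfold posPartFun
  rw [varFun_step a w C c e hce hinj, clamp_step a w C c e hce]
  dsimp only
  rw [fc_eq a w C c]
  have h1 : ∀ (A B K : ℝ), (A + (B + K) - K)/2 = (A + B)/2 := fun A B K => by ring
  rw [h1, ← Finset.sum_add_distrib, Finset.sum_div]
  refine Finset.sum_congr rfl (fun j _ => by ring)

lemma negPart_step (hce : c ≤ e) (hinj : Function.Injective a) :
    negPartFun (fun x => (∑ j, w j * lcHeaviside (x - a j)) + C) c e
      = fun x => ∑ j ∈ Finset.univ.filter (fun j => c ≤ a j ∧ a j < e),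
          ((|w j| - w j)/2) * lcHeaviside (x - a j) := by
  funext x
  unfold negPartFun
  rw [varFun_step a w C c e hce hinj, clamp_step a w C c e hce]
  dsimp only
  rw [fc_eq a w C c]
  have h1 : ∀ (A B K : ℝ), (A - (B + K) + K)/2 = (A - B)/2 := fun A B K => by ring
  rw [h1, ← Finset.sum_sub_distrib, Finset.sum_div]
  refine Finset.sum_congr rfl (fun j _ => by ring)

lemma integral_dirac_sum {κ : Type} (S : Finset κ) (aa : κ → ℝ) (pw : κ → ℝ)
    (hpw : ∀ j ∈ S, 0 ≤ pw j) (hmem : ∀ j ∈ S, aa j ∈ Ico c e) (φ : ℝ → ℝ) :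
    ∫ x in Ico c e, φ x ∂(∑ j ∈ S, ENNReal.ofReal (pw j) • Measure.dirac (aa j))
      = ∑ j ∈ S, pw j * φ (aa j) := by
  rw [← integral_indicator measurableSet_Ico]
  rw [integral_finset_sum_measure ?_]
  · refine Finset.sum_congr rfl (fun j hj => ?_)
    rw [integral_smul_measure, integral_dirac, smul_eq_mul,
      ENNReal.toReal_ofReal (hpw j hj), Set.indicator_of_mem (hmem j hj)]
  · intro j hj
    refine Integrable.smul_measure ?_ ENNReal.ofReal_ne_top
    refine (integrable_const ((Ico c e).indicator φ (aa j))).congr ?_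
    rw [Filter.EventuallyEq, MeasureTheory.ae_dirac_eq]
    exact Filter.eventually_pure.2 rfl

lemma lsIntIcoR_step (hce : c ≤ e) (hinj : Function.Injective a) (φ : ℝ → ℝ) :
    lsIntIcoR (fun x => (∑ j, w j * lcHeaviside (x - a j)) + C) c e φ
      = ∑ j ∈ Finset.univ.filter (fun j => c ≤ a j ∧ a j < e), w j * φ (a j) := by
  unfold lsIntIcoR
  rw [posPart_step a w C c e hce hinj, negPart_step a w C c e hce hinj,
    monoMeasure_step _ a _ (fun j _ => div_nonneg
      (by have := neg_abs_le (w j); linarith) (by norm_num)),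
    monoMeasure_step _ a _ (fun j _ => div_nonneg
      (by have := le_abs_self (w j); linarith) (by norm_num))]
  rw [integral_dirac_sum c e _ a _ (fun j _ => div_nonneg
      (by have := neg_abs_le (w j); linarith) (by norm_num))
      (fun j hj => ⟨((Finset.mem_filter.1 hj).2).1, ((Finset.mem_filter.1 hj).2).2⟩) φ,
    integral_dirac_sum c e _ a _ (fun j _ => div_nonneg
      (by have := le_abs_self (w j); linarith) (by norm_num))
      (fun j hj => ⟨((Finset.mem_filter.1 hj).2).1, ((Finset.mem_filter.1 hj).2).2⟩) φ,
    ← Finset.sum_sub_distrib]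
  refine Finset.sum_congr rfl (fun j _ => by ring)

end Step
section Step2
open scoped Classical
variable {ι : Type} [Fintype ι]
lemma lsIntIcoC_step (a : ι → ℝ) (z : ι → ℂ) (C : ℂ) (c e : ℝ)
    (hce : c ≤ e) (hinj : Function.Injective a) (φ : ℝ → ℂ) :
    lsIntIcoC (fun x => (∑ j, lcHeaviside (x - a j) • z j) + C) c e φ
      = ∑ j ∈ Finset.univ.filter (fun j => c ≤ a j ∧ a j < e), z j * φ (a j) := by
  unfold lsIntIcoC
  have hre : (fun x => ((∑ j, lcHeaviside (x - a j) • z j) + C).re)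
      = fun x => (∑ j, (z j).re * lcHeaviside (x - a j)) + C.re := by
    funext x
    rw [Complex.add_re, Complex.re_sum]
    congr 1
    exact Finset.sum_congr rfl (fun j _ => by rw [Complex.smul_re, smul_eq_mul, mul_comm])
  have him : (fun x => ((∑ j, lcHeaviside (x - a j) • z j) + C).im)
      = fun x => (∑ j, (z j).im * lcHeaviside (x - a j)) + C.im := by
    funext x
    rw [Complex.add_im, Complex.im_sum]
    congr 1
    exact Finset.sum_congr rfl (fun j _ => by rw [Complex.smul_im, smul_eq_mul, mul_comm])
  rw [hre, him,
    lsIntIcoR_step a _ _ c e hce hinj _, lsIntIcoR_step a _ _ c e hce hinj _,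
    lsIntIcoR_step a _ _ c e hce hinj _, lsIntIcoR_step a _ _ c e hce hinj _]
  apply Complex.ext
  · simp only [Complex.add_re, Complex.sub_re, Complex.sub_im, Complex.mul_re, Complex.I_re, Complex.I_im,
      Complex.re_sum, Complex.ofReal_re, Complex.add_im, Complex.ofReal_im, Complex.mul_im,
      Complex.im_sum]
    rw [← Finset.sum_sub_distrib]
    ring
  · simp only [Complex.add_re, Complex.sub_re, Complex.sub_im, Complex.mul_re, Complex.I_re, Complex.I_im,
      Complex.re_sum, Complex.ofReal_re, Complex.add_im, Complex.ofReal_im, Complex.mul_im,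
      Complex.im_sum]
    rw [← Finset.sum_add_distrib]
    ring

lemma lsIntIcoMM_step {d : ℕ} (a : ι → ℝ) (M : ι → Matrix (Fin d) (Fin d) ℂ)
    (c e : ℝ) (hce : c ≤ e) (hinj : Function.Injective a)
    (G : ℝ → Matrix (Fin d) (Fin d) ℂ) :
    lsIntIcoMM (fun x => ∑ l, (lcHeaviside (x - a l) - 1) • M l) c e G
      = ∑ l ∈ Finset.univ.filter (fun l => c ≤ a l ∧ a l < e), M l * G (a l) := by
  unfold lsIntIcoMM
  ext i k
  show (∑ j, lsIntIcoC (fun τ => (∑ l, (lcHeaviside (τ - a l) - 1) • M l) i j) c e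
      (fun τ => G τ j k)) = _
  have hent : ∀ j : Fin d, (fun τ => (∑ l, (lcHeaviside (τ - a l) - 1) • M l) i j)
      = fun τ => (∑ l, lcHeaviside (τ - a l) • (M l i j)) + (- ∑ l, M l i j) := by
    intro j
    funext τ
    rw [Matrix.sum_apply, ← Finset.sum_neg_distrib, ← Finset.sum_add_distrib]
    refine Finset.sum_congr rfl (fun l _ => ?_)
    show (lcHeaviside (τ - a l) - 1) • (M l i j) = _
    rw [sub_smul, one_smul, sub_eq_add_neg]
  have step : ∀ j : Fin d, lsIntIcoC (fun τ => (∑ l, (lcHeaviside (τ - a l) - 1) • M l) i j)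
      c e (fun τ => G τ j k)
      = ∑ l ∈ Finset.univ.filter (fun l => c ≤ a l ∧ a l < e), (M l i j) * G (a l) j k := by
    intro j
    rw [hent j]
    exact lsIntIcoC_step a _ _ c e hce hinj _
  rw [Finset.sum_congr rfl (fun j _ => step j), Finset.sum_comm, Matrix.sum_apply]
  refine Finset.sum_congr rfl (fun l _ => ?_)
  rw [Matrix.mul_apply]
end Step2

/-- **Identification of the resolvent with the fundamental solution** (end of the
proof of Theorem 1.1).

Let `k` be the Stieltjes–Volterra kernel of the difference-delay system on
`[s, s+τ_N] × [s, s+τ_N]` and `ρ` its resolvent. Then for all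
`(t,α) ∈ [s, s+τ_N) × [s, s+τ_N)` one has `H(t-α) I_d + ρ(t,α) = X(t,α)`, where `H`
is the right-continuous Heaviside function and `X` is the fundamental solution. -/
theorem resolvent_equals_fundamental_solution
    (d N : ℕ) (hd : 0 < d)
    (τ : Fin (N + 1) → ℝ) (hτpos : ∀ j, 0 < τ j) (hτmono : StrictMono τ)
    (D : Fin (N + 1) → ℝ → Matrix (Fin d) (Fin d) ℂ) (hD : ∀ j, Continuous (D j))
    (s : ℝ)
    -- the kernel of the difference-delay system
    (k : ℝ → ℝ → Matrix (Fin d) (Fin d) ℂ)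
    (hk : k = fun t τ' => if τ' ≤ t then
      (∑ j, lcHeaviside (τ' - t + τ j) • D j t) - ∑ j, D j t else 0)
    -- its resolvent
    (ρ : ℝ → ℝ → Matrix (Fin d) (Fin d) ℂ)
    (hρ : IsResolvent d s (s + τ (Fin.last N)) k ρ)
    -- the fundamental solution
    (X : ℝ → ℝ → Matrix (Fin d) (Fin d) ℂ)
    (hX0 : ∀ t α : ℝ, t < α → X t α = 0)
    (hXrec : ∀ t α : ℝ, α ≤ t → X t α = 1 + ∑ j, D j t * X (t - τ j) α) :
    ∀ t ∈ Ico s (s + τ (Fin.last N)), ∀ α ∈ Ico s (s + τ (Fin.last N)),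
      (if 0 ≤ t - α then (1 : Matrix (Fin d) (Fin d) ℂ) else 0) + ρ t α = X t α := by
  classical
  intro t ht α hα
  obtain ⟨hρSV, hρeq⟩ := hρ
  obtain ⟨-, hρ0, -, -, -⟩ := hρSV
  set b := s + τ (Fin.last N) with hb
  have hτ0 : 0 < τ 0 := hτpos 0
  have hτle : ∀ j : Fin (N + 1), τ 0 ≤ τ j := fun j => hτmono.monotone (Fin.zero_le j)
  have hainj : ∀ t' : ℝ, Function.Injective (fun l : Fin (N + 1) => t' - τ l) := by
    intro t' l1 l2 h
    dsimp only at h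
    exact hτmono.injective (by linarith)
  have hkstep : ∀ t' : ℝ,
      k t' = fun x => ∑ l, (lcHeaviside (x - (t' - τ l)) - 1) • D l t' := by
    intro t'
    funext x
    simp only [hk]
    by_cases hx : x ≤ t'
    · rw [if_pos hx, ← Finset.sum_sub_distrib]
      refine Finset.sum_congr rfl (fun l _ => ?_)
      have harg : x - t' + τ l = x - (t' - τ l) := by ring
      rw [harg, sub_smul, one_smul]
    · rw [if_neg hx]
      symm
      refine Finset.sum_eq_zero (fun l _ => ?_)
      rw [lcH_pos (by push_neg at hx; have := hτpos l; linarith), sub_self, zero_smul]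
  have hbase : ∀ t' ∈ Ico s b, t' ≤ α →
      (if 0 ≤ t' - α then (1 : Matrix (Fin d) (Fin d) ℂ) else 0) + ρ t' α = X t' α := by
    intro t' ht' hle
    have hρz : ρ t' α = 0 :=
      hρ0 t' ⟨ht'.1, ht'.2.le⟩ α ⟨hα.1, hα.2.le⟩ hle
    rcases eq_or_lt_of_le hle with rfl | hlt
    · have hX1 : X t' t' = 1 := by
        rw [hXrec t' t' le_rfl]
        rw [Finset.sum_congr rfl (fun j _ => by
          rw [hX0 (t' - τ j) t' (by have := hτpos j; linarith), mul_zero]),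
          Finset.sum_const_zero, add_zero]
      rw [hρz, hX1, sub_self, if_pos le_rfl, add_zero]
    · rw [hρz, hX0 t' α hlt, if_neg (by push_neg; linarith), add_zero]
  have main : ∀ n : ℕ, ∀ t' ∈ Ico s b, t' - α ≤ n * τ 0 →
      (if 0 ≤ t' - α then (1 : Matrix (Fin d) (Fin d) ℂ) else 0) + ρ t' α = X t' α := by
    intro n
    induction n with
    | zero =>
      intro t' ht' hn
      exact hbase t' ht' (by push_cast at hn; linarith)
    | succ n ih =>
      intro t' ht' hn
      rcases le_or_gt t' α with hle | hgt
      · exact hbase t' ht' hle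
      · have hres := hρeq t' ⟨ht'.1, ht'.2.le⟩ α ⟨hα.1, hα.2.le⟩
        rw [hkstep t'] at hres
        rw [lsIntIcoMM_step (fun l : Fin (N + 1) => t' - τ l) (fun l => D l t')
          α t' hgt.le (hainj t') (fun τ'' => ρ τ'' α)] at hres
        set S := Finset.univ.filter
          (fun l : Fin (N + 1) => α ≤ t' - τ l ∧ t' - τ l < t') with hS
        have hSS : Finset.univ.filter (fun l : Fin (N + 1) => α ≤ t' - τ l) = S := by
          rw [hS]
          refine Finset.filter_congr (fun l _ => ?_)
          have : t' - τ l < t' := by have := hτpos l; linarith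
          simp [this]
        have hk0 : (∑ l, (lcHeaviside (α - (t' - τ l)) - 1) • D l t')
            = - ∑ l ∈ S, D l t' := by
          have key : ∀ l : Fin (N + 1), (lcHeaviside (α - (t' - τ l)) - 1) • D l t'
              = if α ≤ t' - τ l then - D l t' else 0 := by
            intro l
            by_cases h : α ≤ t' - τ l
            · rw [if_pos h, lcH_nonpos (by linarith)]
              rw [zero_sub, neg_smul, one_smul]
            · rw [if_neg h, lcH_pos (by push_neg at h; linarith), sub_self, zero_smul]
          rw [Finset.sum_congr rfl (fun l _ => key l), ← Finset.sum_filter, hSS,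
            ← Finset.sum_neg_distrib]
        beta_reduce at hres
        rw [hk0, neg_neg] at hres
        have hih : ∀ l ∈ S, (1 : Matrix (Fin d) (Fin d) ℂ) + ρ (t' - τ l) α
            = X (t' - τ l) α := by
          intro l hl
          have hm := (Finset.mem_filter.1 hl).2
          have h1 : t' - τ l ∈ Ico s b := ⟨le_trans hα.1 hm.1, lt_trans hm.2 ht'.2⟩
          have h2 : t' - τ l - α ≤ n * τ 0 := by
            have := hτle l
            push_cast at hn ⊢
            linarith
          have := ih (t' - τ l) h1 h2
          rwa [if_pos (by linarith [hm.1] : (0:ℝ) ≤ t' - τ l - α)] at this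
        have hρval : ρ t' α = ∑ l ∈ S, D l t' * X (t' - τ l) α := by
          rw [hres, ← Finset.sum_add_distrib]
          refine Finset.sum_congr rfl (fun l hl => ?_)
          rw [← hih l hl, mul_add, mul_one]
        have hXsum : (∑ l ∈ S, D l t' * X (t' - τ l) α)
            = ∑ j, D j t' * X (t' - τ j) α := by
          rw [hS]
          refine Finset.sum_filter_of_ne (fun j _ hne => ?_)
          constructor
          · by_contra hcon
            push_neg at hcon
            exact hne (by rw [hX0 (t' - τ j) α hcon, mul_zero])
          · have := hτpos j; linarith
        rw [if_pos (by linarith : (0:ℝ) ≤ t' - α), hXrec t' α hgt.le, hρval, hXsum]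
  obtain ⟨n, hn⟩ := exists_nat_ge ((t - α) / τ 0)
  exact main n t ht ((div_le_iff₀ hτ0).1 hn)

end
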